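/- Let X ∈ ℝ^{n1×n2×n3}, γ > 0, λ > 0, and let B = {Y : max_{ijk} |Y_{ijk}| ≤ a} for some a > 0. Define Ψ(Y, L) = ‖L − Y‖²_F + λψ(Y) and Ψ̂(Y, L; Z) = ‖L − Y‖²_F + λψ̂(Y; Z). Suppose Y_t ∈ B, L_t ∈ ℝ^{n1×n2×n3}, and Y_{t+1} ∈ B satisfies Ψ̂(Y_{t+1}, L_t; Y_t) ≤ Ψ̂(Y, L_t; Y_t) for all Y ∈ B. Then Ψ(Y_{t+1}, L_t) ≤ Ψ(Y_t, L_t). -/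
import Mathlib


/-- The Welsch loss ψ(Y) = 2γ Σ_p (1 − exp(−(Y_p − X_p)²/(2γ))). -/
noncomputable def welsch {n1 n2 n3 : ℕ} (γ : ℝ) (X Y : Fin n1 × Fin n2 × Fin n3 → ℝ) : ℝ :=
  2 * γ * ∑ p : Fin n1 × Fin n2 × Fin n3, (1 - Real.exp (-(Y p - X p) ^ 2 / (2 * γ)))

/-- The exponential weight ω(Z)_p = exp(−(Z_p − X_p)²/(2γ)). -/
noncomputable def weight {n1 n2 n3 : ℕ} (γ : ℝ) (X Z : Fin n1 × Fin n2 × Fin n3 → ℝ) :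
    Fin n1 × Fin n2 × Fin n3 → ℝ :=
  fun p => Real.exp (-(Z p - X p) ^ 2 / (2 * γ))

/-- The quadratic surrogate ψ̂(Y; Z). -/
noncomputable def welschSurrogate {n1 n2 n3 : ℕ} (γ : ℝ)
    (X Y Z : Fin n1 × Fin n2 × Fin n3 → ℝ) : ℝ :=
  welsch γ X Z + ∑ p : Fin n1 × Fin n2 × Fin n3, weight γ X Z p * (Y p - X p) ^ 2
    - ∑ p : Fin n1 × Fin n2 × Fin n3, weight γ X Z p * (Z p - X p) ^ 2

/-- The objective Ψ(Y, L) = ‖L − Y‖²_F + λψ(Y). -/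
noncomputable def PsiObj {n1 n2 n3 : ℕ} (γ lam : ℝ)
    (X Y L : Fin n1 × Fin n2 × Fin n3 → ℝ) : ℝ :=
  (∑ p : Fin n1 × Fin n2 × Fin n3, (L p - Y p) ^ 2) + lam * welsch γ X Y

/-- The surrogate objective Ψ̂(Y, L; Z) = ‖L − Y‖²_F + λψ̂(Y; Z). -/
noncomputable def PsiSurrogate {n1 n2 n3 : ℕ} (γ lam : ℝ)
    (X Y L Z : Fin n1 × Fin n2 × Fin n3 → ℝ) : ℝ :=
  (∑ p : Fin n1 × Fin n2 × Fin n3, (L p - Y p) ^ 2) + lam * welschSurrogate γ X Y Z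


lemma welsch_pt_le (γ u v : ℝ) (hγ : 0 < γ) :
    2 * γ * (1 - Real.exp (-u ^ 2 / (2 * γ))) ≤
      2 * γ * (1 - Real.exp (-v ^ 2 / (2 * γ)))
        + Real.exp (-v ^ 2 / (2 * γ)) * u ^ 2
        - Real.exp (-v ^ 2 / (2 * γ)) * v ^ 2 := by
  set s : ℝ := -u ^ 2 / (2 * γ) with hs
  set t : ℝ := -v ^ 2 / (2 * γ) with ht
  have hu : u ^ 2 = 2 * γ * (-s) := by rw [hs]; field_simp
  have hv : v ^ 2 = 2 * γ * (-t) := by rw [ht]; field_simp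
  have hkey : (s - t) + 1 ≤ Real.exp (s - t) := Real.add_one_le_exp _
  have hexp : Real.exp (s - t) * Real.exp t = Real.exp s := by
    rw [← Real.exp_add]; ring_nf
  have hpos : 0 < Real.exp t := Real.exp_pos _
  nlinarith [mul_le_mul_of_nonneg_right hkey hpos.le, Real.exp_pos s]

lemma welsch_le_surrogate {n1 n2 n3 : ℕ} (γ : ℝ) (hγ : 0 < γ)
    (X Y Z : Fin n1 × Fin n2 × Fin n3 → ℝ) :
    welsch γ X Y ≤ welschSurrogate γ X Y Z := by
  unfold welschSurrogate welsch weight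
  rw [Finset.mul_sum, Finset.mul_sum, ← Finset.sum_add_distrib, ← Finset.sum_sub_distrib]
  apply Finset.sum_le_sum
  intro p _
  exact welsch_pt_le γ (Y p - X p) (Z p - X p) hγ

lemma surrogate_self {n1 n2 n3 : ℕ} (γ : ℝ) (X Z : Fin n1 × Fin n2 × Fin n3 → ℝ) :
    welschSurrogate γ X Z Z = welsch γ X Z := by
  unfold welschSurrogate
  ring

/-- Majorization-step descent: if `Y_{t+1}` minimizes the surrogate `Ψ̂(·, L_t; Y_t)` over the
box `B = {Y : ‖Y‖_∞ ≤ a}` and `Y_t ∈ B`, then `Ψ(Y_{t+1}, L_t) ≤ Ψ(Y_t, L_t)`. -/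
theorem surrogate_min_descent {n1 n2 n3 : ℕ} (γ lam a : ℝ)
    (hγ : 0 < γ) (hlam : 0 < lam) (ha : 0 < a)
    (X Yt Lt Yt1 : Fin n1 × Fin n2 × Fin n3 → ℝ)
    (hYt : ∀ p, |Yt p| ≤ a) (hYt1 : ∀ p, |Yt1 p| ≤ a)
    (hmin : ∀ Y : Fin n1 × Fin n2 × Fin n3 → ℝ, (∀ p, |Y p| ≤ a) →
      PsiSurrogate γ lam X Yt1 Lt Yt ≤ PsiSurrogate γ lam X Y Lt Yt) :
    PsiObj γ lam X Yt1 Lt ≤ PsiObj γ lam X Yt Lt := by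
  have h1 : PsiObj γ lam X Yt1 Lt ≤ PsiSurrogate γ lam X Yt1 Lt Yt := by
    unfold PsiObj PsiSurrogate
    have := welsch_le_surrogate γ hγ X Yt1 Yt
    nlinarith
  have h2 := hmin Yt hYt
  have h3 : PsiSurrogate γ lam X Yt Lt Yt = PsiObj γ lam X Yt Lt := by
    unfold PsiSurrogate PsiObj
    rw [surrogate_self]
  linarith
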